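/- Let H be a complex inner product space, q ∈ ℝ, and let ξ ∈ H be a unit vector (⟨ξ, ξ⟩ = 1). Then for every n ≥ 0, evaluating the q-Hermite polynomial H_n^q on the field operator s_ξ and applying it to the vacuum gives H_n^q(s_ξ)(Ω) = ξ^{⊗n} (with ξ^{⊗0} = Ω). -/

import Mathlib

noncomputable section

variable {H : Type*} [NormedAddCommGroup H] [InnerProductSpace ℂ H]

/-- `[n]_q = 1 + q + ⋯ + q^(n-1)`. -/
def qInt (q : ℝ) (n : ℕ) : ℝ := ∑ i ∈ Finset.range n, q ^ i

/-- The `q`-Hermite polynomials (with complex coefficients):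
`H₀ = 1`, `H₁ = X` and `X·Hₙ = Hₙ₊₁ + [n]_q·Hₙ₋₁`. -/
def qHermite (q : ℝ) : ℕ → Polynomial ℂ
  | 0 => 1
  | 1 => Polynomial.X
  | n + 2 =>
      Polynomial.X * qHermite q (n + 1) - Polynomial.C ((qInt q (n + 1) : ℝ) : ℂ) * qHermite q n

/-- The simple tensor `ζ 0 ⊗ ⋯ ⊗ ζ (n-1)` in the algebraic Fock space
`F(H) = ⨁ₙ H^{⊗n}`, realized as the tensor algebra (for `n = 0` this is the
vacuum vector `Ω = 1`). -/
def st (n : ℕ) (ζ : Fin n → H) : TensorAlgebra ℂ H :=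
  (List.ofFn fun i => TensorAlgebra.ι ℂ (ζ i)).prod

/-- Remove the `i`-th entry from a tuple. -/
def removeNth {α : Type*} : {n : ℕ} → Fin n → (Fin n → α) → Fin (n - 1) → α
  | 0, i, _ => i.elim0
  | _ + 1, i, ζ => fun j => ζ (i.succAbove j)

/-- `c` is the family of `q`-creation operators. -/
def IsCreation (c : H → Module.End ℂ (TensorAlgebra ℂ H)) : Prop :=
  ∀ (ξ : H) (n : ℕ) (ζ : Fin n → H), c ξ (st n ζ) = st (n + 1) (Fin.cons ξ ζ)

/-- `a` is the family of `q`-annihilation operators. -/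
def IsAnnihilation (q : ℝ) (a : H → Module.End ℂ (TensorAlgebra ℂ H)) : Prop :=
  ∀ (ξ : H) (n : ℕ) (ζ : Fin n → H),
    a ξ (st n ζ) =
      ∑ i : Fin n, ((q : ℂ) ^ (i : ℕ) * (inner ℂ ξ (ζ i) : ℂ)) • st (n - 1) (removeNth i ζ)


lemma field_apply (q : ℝ) (c a : H → Module.End ℂ (TensorAlgebra ℂ H))
    (hc : IsCreation c) (ha : IsAnnihilation q a)
    (ξ : H) (hξ : (inner ℂ ξ ξ : ℂ) = 1) (n : ℕ) :
    (c ξ + a ξ) (st n (fun _ => ξ)) =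
      st (n + 1) (fun _ => ξ) + ((qInt q n : ℝ) : ℂ) • st (n - 1) (fun _ => ξ) := by
  have h1 : c ξ (st n (fun _ => ξ)) = st (n + 1) (fun _ => ξ) := by
    rw [hc ξ n (fun _ => ξ)]
    congr 1
    funext i
    induction i using Fin.cases <;> rfl
  have h2 : a ξ (st n (fun _ => ξ)) = ((qInt q n : ℝ) : ℂ) • st (n - 1) (fun _ => ξ) := by
    rw [ha ξ n (fun _ => ξ)]
    have hrm : ∀ i : Fin n, removeNth i (fun _ => ξ) = (fun _ => ξ) := by
      intro i
      cases n with
      | zero => exact i.elim0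
      | succ m => rfl
    simp only [hξ, mul_one, hrm, ← Finset.sum_smul]
    congr 1
    rw [qInt]
    push_cast
    rw [Finset.sum_range fun i => ((q : ℂ)) ^ i]
  simp [h1, h2]

/-- For a unit vector `ξ`, `H_n^q(s_ξ) Ω = ξ^{⊗n}`. -/
theorem stmt9 (q : ℝ) (c a : H → Module.End ℂ (TensorAlgebra ℂ H))
    (hc : IsCreation c) (ha : IsAnnihilation q a)
    (ξ : H) (hξ : (inner ℂ ξ ξ : ℂ) = 1) (n : ℕ) :
    (Polynomial.aeval (c ξ + a ξ) (qHermite q n)) (1 : TensorAlgebra ℂ H) =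
      st n (fun _ => ξ) := by
  induction n using Nat.twoStepInduction with
  | zero => simp [qHermite, st]
  | one =>
      have := field_apply q c a hc ha ξ hξ 0
      simp only [qHermite, Polynomial.aeval_X]
      rw [show (st 0 (fun _ => ξ) : TensorAlgebra ℂ H) = 1 from rfl] at this
      simp [qInt] at this
      simpa using this
  | more m ih1 ih2 =>
      have key := field_apply q c a hc ha ξ hξ (m + 1)
      simp only [qHermite, map_sub, map_mul, Polynomial.aeval_X, Polynomial.aeval_C]
      rw [LinearMap.sub_apply, Module.End.mul_apply, ih2, key, Module.End.mul_apply,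
        Algebra.algebraMap_eq_smul_one, LinearMap.smul_apply, Module.End.one_apply, ih1]
      simp [add_sub_cancel_right]
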